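/- Let O be an n×n complex Hermitian matrix and ρ an n×n density matrix. Define F : ℝ → ℝ by F(γ) = (1/γ)·log(Re Tr(exp(γ•O)·ρ)) for γ ≠ 0 and F(0) = Re Tr(O·ρ). Then F is monotone non-decreasing on all of ℝ: for all real γ₁ ≤ γ₂, F(γ₁) ≤ F(γ₂). -/

import Mathlib

open Matrix Filter NormedSpace ComplexOrder

section aux

private lemma sum_exp_pos {n : ℕ} (p lam : Fin n → ℝ) (hp : ∀ i, 0 ≤ p i)
    (hsum : ∑ i, p i = 1) (γ : ℝ) :
    0 < ∑ i, p i * Real.exp (γ * lam i) := by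
  obtain ⟨i, -, hi⟩ := Finset.exists_ne_zero_of_sum_ne_zero (by rw [hsum]; norm_num :
    ∑ i, p i ≠ 0)
  refine Finset.sum_pos' (fun j _ => mul_nonneg (hp j) (Real.exp_pos _).le) ⟨i, Finset.mem_univ i, ?_⟩
  exact mul_pos (lt_of_le_of_ne (hp i) (Ne.symm hi)) (Real.exp_pos _)

private lemma jensen_exp {n : ℕ} (p lam : Fin n → ℝ) (hp : ∀ i, 0 ≤ p i)
    (hsum : ∑ i, p i = 1) (γ : ℝ) :
    γ * ∑ i, p i * lam i ≤ Real.log (∑ i, p i * Real.exp (γ * lam i)) := by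
  rw [Real.le_log_iff_exp_le (sum_exp_pos p lam hp hsum γ)]
  have h := convexOn_exp.map_sum_le (t := Finset.univ) (w := p) (p := fun i => γ * lam i)
      (fun i _ => hp i) hsum (fun i _ => Set.mem_univ _)
  simpa [Finset.mul_sum, smul_eq_mul, mul_left_comm, mul_comm, mul_assoc] using h

private lemma key_pos {n : ℕ} (p lam : Fin n → ℝ) (hp : ∀ i, 0 ≤ p i) (hsum : ∑ i, p i = 1)
    {a b : ℝ} (ha : 0 < a) (hab : a ≤ b) :
    (1/a) * Real.log (∑ i, p i * Real.exp (a * lam i)) ≤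
    (1/b) * Real.log (∑ i, p i * Real.exp (b * lam i)) := by
  have hb : 0 < b := lt_of_lt_of_le ha hab
  have hs : (1:ℝ) ≤ b / a := (one_le_div ha).2 hab
  have h := Real.arith_mean_le_rpow_mean Finset.univ p (fun i => Real.exp (a * lam i))
    (fun i _ => hp i) hsum (fun i _ => (Real.exp_pos _).le) hs
  have hrw : ∀ i : Fin n, Real.exp (a * lam i) ^ (b / a) = Real.exp (b * lam i) := by
    intro i
    rw [← Real.exp_mul]
    congr 1
    field_simp
  simp only [hrw] at h
  -- h : SA ≤ SB ^ (1 / (b/a))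
  have hSB := sum_exp_pos p lam hp hsum b
  have hSA := sum_exp_pos p lam hp hsum a
  have hlog : Real.log (∑ i, p i * Real.exp (a * lam i)) ≤
      (1 / (b/a)) * Real.log (∑ i, p i * Real.exp (b * lam i)) := by
    have := Real.log_le_log hSA h
    rwa [Real.log_rpow hSB] at this
  have h2 := mul_le_mul_of_nonneg_left hlog (le_of_lt (one_div_pos.2 ha))
  calc (1/a) * Real.log (∑ i, p i * Real.exp (a * lam i)) ≤
      (1/a) * ((1 / (b/a)) * Real.log (∑ i, p i * Real.exp (b * lam i))) := h2
    _ = (1/b) * Real.log (∑ i, p i * Real.exp (b * lam i)) := by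
        field_simp

private lemma classical_mono {n : ℕ} (p lam : Fin n → ℝ) (hp : ∀ i, 0 ≤ p i)
    (hsum : ∑ i, p i = 1) :
    Monotone (fun γ : ℝ => if γ = 0 then ∑ i, p i * lam i
      else (1/γ) * Real.log (∑ i, p i * Real.exp (γ * lam i))) := by
  have hF0le : ∀ b : ℝ, 0 < b → ∑ i, p i * lam i ≤
      (1/b) * Real.log (∑ i, p i * Real.exp (b * lam i)) := by
    intro b hb
    have h := jensen_exp p lam hp hsum b
    rw [one_div, inv_mul_eq_div, le_div_iff₀ hb]
    linarith
  have hleF0 : ∀ a : ℝ, a < 0 →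
      (1/a) * Real.log (∑ i, p i * Real.exp (a * lam i)) ≤ ∑ i, p i * lam i := by
    intro a ha
    have h := jensen_exp p lam hp hsum a
    rw [one_div, inv_mul_eq_div, div_le_iff_of_neg ha]
    linarith
  have hneg : ∀ a b : ℝ, a ≤ b → b < 0 →
      (1/a) * Real.log (∑ i, p i * Real.exp (a * lam i)) ≤
      (1/b) * Real.log (∑ i, p i * Real.exp (b * lam i)) := by
    intro a b hab hb
    have ha : a < 0 := lt_of_le_of_lt hab hb
    have h := key_pos p (fun i => -lam i) hp hsum (a := -b) (b := -a)
      (by linarith) (by linarith)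
    have hrw : ∀ (c : ℝ) (i : Fin n), -c * -lam i = c * lam i := fun c i => by ring
    simp only [hrw] at h
    have : -((1/b) * Real.log (∑ i, p i * Real.exp (b * lam i))) ≤
        -((1/a) * Real.log (∑ i, p i * Real.exp (a * lam i))) := by
      calc -((1/b) * Real.log (∑ i, p i * Real.exp (b * lam i)))
          = (1/(-b)) * Real.log (∑ i, p i * Real.exp (b * lam i)) := by ring
        _ ≤ (1/(-a)) * Real.log (∑ i, p i * Real.exp (a * lam i)) := h
        _ = -((1/a) * Real.log (∑ i, p i * Real.exp (a * lam i))) := by ring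
    linarith
  intro a b hab
  rcases eq_or_lt_of_le hab with rfl | hab'
  · exact le_refl _
  simp only
  rcases lt_trichotomy a 0 with ha | rfl | ha
  · rw [if_neg (ne_of_lt ha)]
    rcases lt_trichotomy b 0 with hb | rfl | hb
    · rw [if_neg (ne_of_lt hb)]; exact hneg a b hab hb
    · rw [if_pos rfl]; exact hleF0 a ha
    · rw [if_neg (ne_of_gt hb)]
      exact le_trans (hleF0 a ha) (hF0le b hb)
  · rw [if_pos rfl, if_neg (ne_of_gt hab')]
    exact hF0le b hab'
  · rw [if_neg (ne_of_gt ha), if_neg (ne_of_gt (lt_trans ha hab'))]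
    exact key_pos p lam hp hsum ha (le_of_lt hab')

private lemma diag_nonneg' {n : ℕ} {M : Matrix (Fin n) (Fin n) ℂ} (hM : M.PosSemidef)
    (i : Fin n) : 0 ≤ M i i := by
  exact hM.diag_nonneg

end aux

/-- **Monotonicity of the quantum tilted loss in the tilt parameter.** For a Hermitian
observable `O` and a density matrix `ρ`, the function
`F(γ) = (1/γ)·log (Re Tr (exp (γ • O) * ρ))` for `γ ≠ 0`, extended by
`F(0) = Re Tr (O * ρ)`, is monotone non-decreasing on all of `ℝ`. -/
theorem qtl_monotone_in_tilt (n : ℕ) (hn : 0 < n)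
    (O ρ : Matrix (Fin n) (Fin n) ℂ)
    (hO : O.IsHermitian) (hρ : ρ.PosSemidef) (hρtr : ρ.trace = 1) :
    Monotone (fun γ : ℝ =>
      if γ = 0 then (O * ρ).trace.re
      else (1 / γ) * Real.log ((NormedSpace.exp (γ • O) * ρ).trace.re)) := by
  classical
  set U : Matrix (Fin n) (Fin n) ℂ := (hO.eigenvectorUnitary : Matrix (Fin n) (Fin n) ℂ)
    with hUdef
  have hU1 : U * star U = 1 := mem_unitaryGroup_iff.mp hO.eigenvectorUnitary.2
  have hU2 : star U * U = 1 := mem_unitaryGroup_iff'.mp hO.eigenvectorUnitary.2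
  have hUunit : IsUnit U := ⟨⟨U, star U, hU1, hU2⟩, rfl⟩
  have hUinv : U⁻¹ = star U := inv_eq_right_inv hU1
  set lam : Fin n → ℝ := hO.eigenvalues with hlam
  set q : Fin n → ℂ := fun i => (star U * ρ * U) i i with hq
  have hqnn : ∀ i, 0 ≤ q i := by
    intro i
    have hPSD : (star U * ρ * U).PosSemidef := by
      simpa [star_eq_conjTranspose] using hρ.conjTranspose_mul_mul_same U
    exact diag_nonneg' hPSD i
  set p : Fin n → ℝ := fun i => (q i).re with hpdef
  have hp : ∀ i, 0 ≤ p i := fun i => (Complex.le_def.mp (hqnn i)).1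
  have hqre : ∀ i, q i = ((p i : ℝ) : ℂ) := by
    intro i
    have h := Complex.le_def.mp (hqnn i)
    apply Complex.ext
    · simp [hpdef]
    · simp [← h.2]
  have hsum : ∑ i, p i = 1 := by
    have htr : (star U * ρ * U).trace = 1 := by
      rw [trace_mul_cycle, hU1, one_mul, hρtr]
    have h1 : (∑ i, q i) = 1 := by rw [← htr]; rfl
    have h2 : (∑ i, q i).re = 1 := by rw [h1]; rfl
    rw [← h2, Complex.re_sum]
  have key : ∀ d : Fin n → ℂ, (U * diagonal d * star U * ρ).trace = ∑ i, d i * q i := by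
    intro d
    have e1 : U * diagonal d * star U * ρ = (U * diagonal d) * (star U * ρ) := by
      simp only [mul_assoc]
    have e2 : star U * ρ * (U * diagonal d) = (star U * ρ * U) * diagonal d := by
      simp only [mul_assoc]
    rw [e1, trace_mul_comm, e2, trace_mul_comm]
    simp [Matrix.trace, Matrix.diag, Matrix.diagonal_mul, hq]
  have hOspec : O = U * diagonal (fun i => ((lam i : ℝ) : ℂ)) * star U := by
    conv_lhs => rw [hO.spectral_theorem]
    rfl
  have hOtrace : (O * ρ).trace.re = ∑ i, p i * lam i := by
    have h1 : (O * ρ).trace = ∑ i, ((lam i : ℝ) : ℂ) * q i := by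
      conv_lhs => rw [hOspec]
      exact key _
    rw [h1, Complex.re_sum]
    refine Finset.sum_congr rfl fun i _ => ?_
    rw [hqre i, ← Complex.ofReal_mul, Complex.ofReal_re]
    ring
  have hexp : ∀ γ : ℝ, (NormedSpace.exp (γ • O) * ρ).trace.re = ∑ i, p i * Real.exp (γ * lam i) := by
    intro γ
    have hsm : γ • O = U * diagonal (fun i => ((γ * lam i : ℝ) : ℂ)) * star U := by
      have hd : diagonal (fun i => ((γ * lam i : ℝ) : ℂ)) =
          γ • diagonal (fun i => ((lam i : ℝ) : ℂ)) := by
        funext i j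
        rcases eq_or_ne i j with rfl | h
        · simp [Matrix.diagonal_apply_eq, Complex.real_smul]
        · simp [Matrix.diagonal_apply_ne _ h, h]
      rw [hOspec, hd, Matrix.mul_smul, Matrix.smul_mul]
    have hdiag : NormedSpace.exp (γ • O) = U * diagonal (fun i => ((Real.exp (γ * lam i) : ℝ) : ℂ))
        * star U := by
      rw [hsm, ← hUinv, Matrix.exp_conj U _ hUunit, Matrix.exp_diagonal, hUinv]
      congr 2
      funext i
      rw [Pi.exp_def]
      simp only [← Complex.exp_eq_exp_ℂ, Complex.ofReal_exp]
    have h1 : (NormedSpace.exp (γ • O) * ρ).trace = ∑ i, ((Real.exp (γ * lam i) : ℝ) : ℂ) * q i := by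
      rw [hdiag]; exact key _
    rw [h1, Complex.re_sum]
    refine Finset.sum_congr rfl fun i _ => ?_
    rw [hqre i, ← Complex.ofReal_mul, Complex.ofReal_re]
    ring
  have hfun : (fun γ : ℝ => if γ = 0 then (O * ρ).trace.re
      else (1 / γ) * Real.log ((NormedSpace.exp (γ • O) * ρ).trace.re)) =
      (fun γ : ℝ => if γ = 0 then ∑ i, p i * lam i
      else (1/γ) * Real.log (∑ i, p i * Real.exp (γ * lam i))) := by
    funext γ
    by_cases h : γ = 0 <;> simp [h, hOtrace, hexp]
  rw [hfun]
  exact classical_mono p lam hp hsum
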